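/- Fix constants U > 0, γ > 0, Δ > 0. Let z, β̃ : ℝ → ℝ be differentiable functions satisfying the linearized closed-loop VFALOS error dynamics z'(t) = (β̃(t)·Δ·U − z(t)·U)/√(Δ² + z(t)²) and β̃'(t) = −γ·Δ·z(t)/√(Δ² + z(t)²). Define V(t) = ½·z(t)² + (U/(2γ))·β̃(t)². Then for every t, V is differentiable at t with V'(t) = −U·z(t)²/√(Δ² + z(t)²). -/
import Mathlib


/-- Along solutions of the linearized closed-loop VFALOS error dynamics,
the Lyapunov function candidate `V = ½ z² + (U/(2γ)) β̃²` is differentiable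
with derivative `V' = −U z²/√(Δ² + z²)`. -/
theorem vfalos_lyapunov_deriv (U γ Δ : ℝ) (hU : 0 < U) (hγ : 0 < γ) (hΔ : 0 < Δ)
    (z βt : ℝ → ℝ) (hz : Differentiable ℝ z) (hβ : Differentiable ℝ βt)
    (hz' : ∀ t, deriv z t = (βt t * Δ * U - z t * U) / Real.sqrt (Δ ^ 2 + z t ^ 2))
    (hβ' : ∀ t, deriv βt t = -(γ * Δ * z t) / Real.sqrt (Δ ^ 2 + z t ^ 2)) :
    ∀ t, HasDerivAt (fun t => (1 / 2) * z t ^ 2 + (U / (2 * γ)) * βt t ^ 2)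
      (-(U * z t ^ 2) / Real.sqrt (Δ ^ 2 + z t ^ 2)) t := by
  intro t
  have hs : 0 < Real.sqrt (Δ ^ 2 + z t ^ 2) := Real.sqrt_pos.2 (by positivity)
  have hzt : HasDerivAt z (deriv z t) t := (hz t).hasDerivAt
  have hβt : HasDerivAt βt (deriv βt t) t := (hβ t).hasDerivAt
  have h1 : HasDerivAt (fun t => (1 / 2) * z t ^ 2 + (U / (2 * γ)) * βt t ^ 2)
      ((1 / 2) * (2 * z t ^ 1 * deriv z t) + (U / (2 * γ)) * (2 * βt t ^ 1 * deriv βt t)) t :=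
    (((hzt.pow 2).const_mul (1 / 2)).add ((hβt.pow 2).const_mul (U / (2 * γ))))
  convert h1 using 1
  rw [hz' t, hβ' t]
  field_simp
  ring
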